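/- Consider the two-strategy dynamics ẋ_1 = x_1(1−x_1) h(ε, x_1) on [0,1], where h is jointly continuous, Lipschitz in x_1 uniformly in ε, and h(0, x_1) > 0 for x_1 ∈ [0, 1/2) while h(0, x_1) < 0 for x_1 ∈ (1/2, 1]. Then for every α ∈ (0, 1/2) there exists ε̄ > 0 such that for all ε ∈ [0, ε̄] and every initial condition x_1(0) ∈ (0,1), the solution of ẋ_1 = x_1(1−x_1)h(ε, x_1) satisfies 1/2 − α ≤ liminf_{t→∞} x_1(t) ≤ limsup_{t→∞} x_1(t) ≤ 1/2 + α. -/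

import Mathlib

open Filter Set Topology

private lemma rhs_lipschitzOn (g : ℝ → ℝ) (K : NNReal) (hg : LipschitzWith K g) :
    ∃ C : NNReal, LipschitzOnWith C (fun y => y * (1 - y) * g y) (Icc (0:ℝ) 1) := by
  refine ⟨K + (‖g 0‖₊ + K), LipschitzOnWith.of_dist_le_mul fun y hy z hz => ?_⟩
  have hb : ∀ w ∈ Icc (0:ℝ) 1, |g w| ≤ |g 0| + K := by
    intro w hw
    have h1 : dist (g w) (g 0) ≤ K * dist w 0 := hg.dist_le_mul w 0
    rw [Real.dist_eq, Real.dist_eq, sub_zero] at h1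
    have h2 : |w| ≤ 1 := abs_le.2 ⟨by linarith [hw.1], hw.2⟩
    have h3 : |g w| - |g 0| ≤ |g w - g 0| := abs_sub_abs_le_abs_sub _ _
    nlinarith [NNReal.coe_nonneg K]
  have key : y * (1 - y) * g y - z * (1 - z) * g z
      = y * (1 - y) * (g y - g z) + g z * ((y - z) * (1 - (y + z))) := by ring
  rw [Real.dist_eq, Real.dist_eq, key]
  have h4 : |g y - g z| ≤ K * |y - z| := by
    have := hg.dist_le_mul y z; rwa [Real.dist_eq, Real.dist_eq] at this
  have h5 : |y * (1 - y)| ≤ 1 := by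
    rw [abs_mul]
    have := abs_le.2 (⟨by linarith [hy.1], hy.2⟩ : -1 ≤ y ∧ y ≤ 1)
    have := abs_le.2 (⟨by linarith [hy.2], by linarith [hy.1]⟩ : -1 ≤ 1 - y ∧ 1 - y ≤ 1)
    nlinarith [abs_nonneg y, abs_nonneg (1 - y)]
  have h6 : |1 - (y + z)| ≤ 1 :=
    abs_le.2 ⟨by linarith [hy.2, hz.2], by linarith [hy.1, hz.1]⟩
  have h7 : |g z| ≤ |g 0| + K := hb z hz
  have hA : |y * (1 - y) * (g y - g z) + g z * ((y - z) * (1 - (y + z)))|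
      ≤ |y * (1 - y)| * |g y - g z| + |g z| * |(y - z) * (1 - (y + z))| := by
    refine (abs_add_le _ _).trans ?_
    rw [abs_mul (y * (1 - y)) (g y - g z), abs_mul (g z)]
  have e1 : |y * (1 - y)| * |g y - g z| ≤ 1 * (↑K * |y - z|) :=
    mul_le_mul h5 h4 (abs_nonneg _) zero_le_one
  have h8 : |(y - z) * (1 - (y + z))| ≤ |y - z| := by
    rw [abs_mul]
    calc |y - z| * |1 - (y + z)| ≤ |y - z| * 1 :=
          mul_le_mul_of_nonneg_left h6 (abs_nonneg _)
      _ = |y - z| := mul_one _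
  have e2 : |g z| * |(y - z) * (1 - (y + z))| ≤ (|g 0| + ↑K) * |y - z| :=
    mul_le_mul h7 h8 (abs_nonneg _) (by positivity)
  have hC : ((K + (‖g 0‖₊ + K) : NNReal) : ℝ) = ↑K + (|g 0| + ↑K) := by
    push_cast [Real.norm_eq_abs]; ring
  rw [hC]
  calc |y * (1 - y) * (g y - g z) + g z * ((y - z) * (1 - (y + z)))|
      ≤ (↑K + (|g 0| + ↑K)) * |y - z| := by linarith
    _ = (↑K + (|g 0| + ↑K)) * |y - z| := rfl

private lemma invariant_Ioo (g : ℝ → ℝ) (C : NNReal)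
    (hLipOn : LipschitzOnWith C (fun y => y * (1 - y) * g y) (Icc (0:ℝ) 1))
    (x : ℝ → ℝ) (hx : ∀ t, HasDerivAt x (x t * (1 - x t) * g (x t)) t)
    (hx0 : x 0 ∈ Ioo (0:ℝ) 1) : ∀ t, 0 ≤ t → x t ∈ Ioo (0:ℝ) 1 := by
  have xc : Continuous x := continuous_iff_continuousAt.mpr fun t => (hx t).continuousAt
  by_contra hcon
  push_neg at hcon
  obtain ⟨t', ht'0, ht'⟩ := hcon
  set S : Set ℝ := Ici 0 ∩ x ⁻¹' (Ioo (0:ℝ) 1)ᶜ with hSdef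
  have hSc : IsClosed S :=
    isClosed_Ici.inter ((isClosed_compl_iff.mpr isOpen_Ioo).preimage xc)
  have hSne : S.Nonempty := ⟨t', ht'0, ht'⟩
  have hSbdd : BddBelow S := ⟨0, fun t ht => ht.1⟩
  set t₂ := sInf S with ht₂def
  have ht₂S : t₂ ∈ S := hSc.csInf_mem hSne hSbdd
  have ht₂pos : 0 < t₂ := by
    rcases eq_or_lt_of_le (show (0:ℝ) ≤ t₂ from ht₂S.1) with h | h
    · exact absurd hx0 (h ▸ ht₂S.2)
    · exact h
  have hbefore : ∀ t, 0 ≤ t → t < t₂ → x t ∈ Ioo (0:ℝ) 1 := by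
    intro t h0 hlt
    by_contra hmem
    exact absurd (csInf_le hSbdd ⟨h0, hmem⟩) (not_le.mpr hlt)
  have hcc : x t₂ ∈ Icc (0:ℝ) 1 := by
    have h1 : t₂ ∈ closure (Ico 0 t₂) := by
      rw [closure_Ico (ne_of_lt ht₂pos)]
      exact ⟨ht₂pos.le, le_rfl⟩
    have h2 : MapsTo x (Ico 0 t₂) (Ioo (0:ℝ) 1) := fun t ht => hbefore t ht.1 ht.2
    have := (xc.continuousWithinAt (s := Ico 0 t₂) (x := t₂)).mem_closure h1 h2
    rwa [closure_Ioo one_ne_zero.symm] at this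
  have hc01 : x t₂ = 0 ∨ x t₂ = 1 := by
    rcases eq_or_lt_of_le hcc.1 with h | h
    · exact Or.inl h.symm
    · rcases eq_or_lt_of_le hcc.2 with h' | h'
      · exact Or.inr h'
      · exact absurd ⟨h, h'⟩ ht₂S.2
  have hceq : x t₂ * (1 - x t₂) * g (x t₂) = 0 := by
    rcases hc01 with h | h <;> rw [h] <;> ring
  have huniq : EqOn x (fun _ => x t₂) (Icc 0 t₂) := by
    apply ODE_solution_unique_of_mem_Icc_left
      (v := fun _ y => y * (1 - y) * g y) (s := fun _ => Icc (0:ℝ) 1) (K := C)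
      (fun _ _ => hLipOn) xc.continuousOn
      (fun t _ => (hx t).hasDerivWithinAt)
      ?_ continuousOn_const ?_ (fun _ _ => hcc) rfl
    · intro t ht
      rcases eq_or_lt_of_le ht.2 with h | h
      · exact h ▸ hcc
      · exact Ioo_subset_Icc_self (hbefore t ht.1.le h)
    · intro t _
      simpa [hceq] using (hasDerivWithinAt_const t (Iic t) (x t₂))
  have h0 := huniq (left_mem_Icc.mpr ht₂pos.le)
  rcases hc01 with h | h
  · rw [h] at h0; exact absurd (h0 ▸ hx0).1 (lt_irrefl 0)
  · rw [h] at h0; exact absurd (h0 ▸ hx0).2 (lt_irrefl 1)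

private lemma eventually_ge_barrier (a : ℝ) (ha0 : 0 < a) (ha1 : a < 1)
    (g : ℝ → ℝ) (m : ℝ) (hm : 0 < m) (hg : ∀ s, 0 ≤ s → s ≤ a → m ≤ g s)
    (x : ℝ → ℝ) (hx : ∀ t, HasDerivAt x (x t * (1 - x t) * g (x t)) t)
    (hinv : ∀ t, 0 ≤ t → x t ∈ Ioo (0:ℝ) 1) : ∀ᶠ t in atTop, a ≤ x t := by
  have xc : Continuous x := continuous_iff_continuousAt.mpr fun t => (hx t).continuousAt
  have barrier : ∀ t₀, 0 ≤ t₀ → a ≤ x t₀ → ∀ t, t₀ ≤ t → a ≤ x t := by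
    intro t₀ h00 ha t' htt'
    by_contra hlt
    push_neg at hlt
    have ht₀t' : t₀ < t' := by
      rcases eq_or_lt_of_le htt' with h | h
      · exact absurd (h ▸ ha) (not_le.mpr hlt)
      · exact h
    set S : Set ℝ := Icc t₀ t' ∩ x ⁻¹' Ici a with hSdef
    have hSc : IsClosed S := isClosed_Icc.inter (isClosed_Ici.preimage xc)
    have hSne : S.Nonempty := ⟨t₀, ⟨le_rfl, htt'⟩, ha⟩
    have hSbdd : BddAbove S := ⟨t', fun t ht => ht.1.2⟩
    set t₁ := sSup S with ht₁def
    have ht₁S : t₁ ∈ S := hSc.csSup_mem hSne hSbdd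
    have ht₁lt : t₁ < t' := by
      rcases eq_or_lt_of_le ht₁S.1.2 with h | h
      · exact absurd (h ▸ ht₁S.2) (not_le.mpr hlt)
      · exact h
    have hafter : ∀ t, t₁ < t → t ≤ t' → x t < a := by
      intro t h1 h2
      by_contra hge
      push_neg at hge
      exact absurd (le_csSup hSbdd ⟨⟨ht₁S.1.1.trans h1.le, h2⟩, hge⟩) (not_le.mpr h1)
    have hx₁le : x t₁ ≤ a := by
      have h1 : t₁ ∈ closure (Ioc t₁ t') := by
        rw [closure_Ioc (ne_of_lt ht₁lt)]
        exact ⟨le_rfl, ht₁lt.le⟩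
      have h2 : MapsTo x (Ioc t₁ t') (Iio a) := fun t ht => hafter t ht.1 ht.2
      have := (xc.continuousWithinAt (s := Ioc t₁ t') (x := t₁)).mem_closure h1 h2
      rwa [closure_Iio] at this
    have hx₁ : x t₁ = a := le_antisymm hx₁le ht₁S.2
    have hd : 0 < x t₁ * (1 - x t₁) * g (x t₁) := by
      rw [hx₁]
      exact mul_pos (mul_pos ha0 (by linarith)) (lt_of_lt_of_le hm (hg a ha0.le le_rfl))
    have hslope : Tendsto (slope x t₁) (𝓝[>] t₁) (𝓝 (x t₁ * (1 - x t₁) * g (x t₁))) :=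
      ((hasDerivAt_iff_tendsto_slope).mp (hx t₁)).mono_left
        (nhdsWithin_mono _ fun t ht => ne_of_gt ht)
    have hev1 : ∀ᶠ t in 𝓝[>] t₁, 0 < slope x t₁ t := hslope.eventually (eventually_gt_nhds hd)
    have hev2 : ∀ᶠ t in 𝓝[>] t₁, t < t' :=
      eventually_nhdsWithin_of_eventually_nhds (eventually_lt_nhds ht₁lt)
    have hev3 : ∀ᶠ t in 𝓝[>] t₁, t₁ < t := self_mem_nhdsWithin
    obtain ⟨t, h1, h2, h3⟩ := (hev1.and (hev2.and hev3)).exists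
    have hne : (0:ℝ) < t - t₁ := by linarith
    rw [slope_def_field] at h1
    have h9 : 0 < x t - x t₁ := by
      have h10 := mul_pos h1 hne
      rwa [div_mul_cancel₀ _ (ne_of_gt hne)] at h10
    exact absurd (hafter t h3 h2.le) (not_lt.mpr (by rw [← hx₁]; linarith))
  by_cases hex : ∃ t₀, 0 ≤ t₀ ∧ a ≤ x t₀
  · obtain ⟨t₀, h0, ha⟩ := hex
    exact eventually_atTop.mpr ⟨t₀, fun t ht => barrier t₀ h0 ha t ht⟩
  · exfalso
    push_neg at hex
    have hc : 0 < x 0 := (hinv 0 le_rfl).1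
    set c := x 0 with hcdef
    set δ := c * (1 - a) * m with hδdef
    have hδpos : 0 < δ := mul_pos (mul_pos hc (by linarith)) hm
    have hderiv_nonneg : ∀ t, 0 ≤ t → 0 ≤ x t * (1 - x t) * g (x t) := by
      intro t ht
      have h1 := hinv t ht
      have h2 := hex t ht
      exact le_of_lt (mul_pos (mul_pos h1.1 (by linarith [h1.2]))
        (lt_of_lt_of_le hm (hg (x t) h1.1.le h2.le)))
    have hmono : MonotoneOn x (Ici 0) := by
      apply monotoneOn_of_deriv_nonneg (convex_Ici 0) xc.continuousOn
        (fun t _ => (hx t).differentiableAt.differentiableWithinAt)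
      intro t ht
      rw [interior_Ici] at ht
      rw [(hx t).deriv]
      exact hderiv_nonneg t (le_of_lt ht)
    have hlow : ∀ t, 0 ≤ t → c ≤ x t := fun t ht => hmono (self_mem_Ici) ht ht
    have hderiv_ge : ∀ t, 0 ≤ t → δ ≤ x t * (1 - x t) * g (x t) := by
      intro t ht
      have h1 := hinv t ht
      have h2 := hex t ht
      have h3 := hlow t ht
      have h4 : m ≤ g (x t) := hg (x t) h1.1.le h2.le
      have h5 : (1:ℝ) - a ≤ 1 - x t := by linarith
      rw [hδdef]
      have : c * (1 - a) ≤ x t * (1 - x t) :=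
        mul_le_mul h3 h5 (by linarith) h1.1.le
      exact mul_le_mul this h4 hm.le (by nlinarith [h1.1, h1.2])
    have hy : ∀ t, HasDerivAt (fun t => x t - δ * t)
        (x t * (1 - x t) * g (x t) - δ) t := by
      intro t
      exact ((hx t).sub ((hasDerivAt_id' t).const_mul δ)).congr_deriv (by rw [mul_one])
    have hymono : MonotoneOn (fun t => x t - δ * t) (Ici 0) := by
      apply monotoneOn_of_deriv_nonneg (convex_Ici 0)
        (Continuous.continuousOn (by continuity))
        (fun t _ => (hy t).differentiableAt.differentiableWithinAt)
      intro t ht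
      rw [interior_Ici] at ht
      rw [(hy t).deriv]
      linarith [hderiv_ge t ht.le]
    set T := (a + 1) / δ with hTdef
    have hT0 : 0 ≤ T := le_of_lt (div_pos (by linarith) hδpos)
    have := hymono self_mem_Ici hT0 hT0
    simp only [mul_zero, sub_zero] at this
    have hδT : δ * T = a + 1 := by
      rw [hTdef]; field_simp
    have : a + 1 ≤ x T := by
      have := this
      nlinarith [hδT]
    exact absurd (hex T hT0) (not_lt.mpr (by linarith))

theorem dominated_survival_two_strategies
    (h : ℝ → ℝ → ℝ) (hcont : Continuous fun p : ℝ × ℝ => h p.1 p.2)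
    (K : NNReal) (hLip : ∀ ε, LipschitzWith K (h ε))
    (hpos : ∀ s, 0 ≤ s → s < 1/2 → 0 < h 0 s)
    (hneg : ∀ s, 1/2 < s → s ≤ 1 → h 0 s < 0) :
    ∀ α ∈ Ioo (0:ℝ) (1/2), ∃ εbar > (0:ℝ), ∀ ε ∈ Icc (0:ℝ) εbar,
      ∀ x : ℝ → ℝ,
        (∀ t, HasDerivAt x (x t * (1 - x t) * h ε (x t)) t) →
        x 0 ∈ Ioo (0:ℝ) 1 →
        1/2 - α ≤ Filter.liminf x atTop ∧ Filter.limsup x atTop ≤ 1/2 + α := by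
  intro α hα
  obtain ⟨hα0, hα2⟩ := hα
  set a : ℝ := 1/2 - α with hadef
  set b : ℝ := 1/2 + α with hbdef
  have ha0 : 0 < a := by rw [hadef]; linarith
  have hb1 : b < 1 := by rw [hbdef]; linarith
  have hab : a < b := by rw [hadef, hbdef]; linarith
  -- tube lemma for the positive region
  have hU : IsOpen {p : ℝ × ℝ | 0 < h p.1 p.2} := isOpen_lt continuous_const hcont
  have hsubU : ({0} : Set ℝ) ×ˢ Icc 0 a ⊆ {p : ℝ × ℝ | 0 < h p.1 p.2} := by
    rintro ⟨e, s⟩ ⟨he, hs⟩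
    simp only [mem_singleton_iff] at he
    simp only [mem_setOf_eq]
    rw [he]
    exact hpos s hs.1 (lt_of_le_of_lt hs.2 (by rw [hadef]; linarith))
  obtain ⟨u, v, huo, hvo, h0u, hav, huv⟩ :=
    generalized_tube_lemma isCompact_singleton isCompact_Icc hU hsubU
  obtain ⟨ε₁, hε₁, hball₁⟩ := Metric.isOpen_iff.mp huo 0 (h0u rfl)
  -- tube lemma for the negative region
  have hV : IsOpen {p : ℝ × ℝ | h p.1 p.2 < 0} := isOpen_lt hcont continuous_const
  have hsubV : ({0} : Set ℝ) ×ˢ Icc b 1 ⊆ {p : ℝ × ℝ | h p.1 p.2 < 0} := by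
    rintro ⟨e, s⟩ ⟨he, hs⟩
    simp only [mem_singleton_iff] at he
    simp only [mem_setOf_eq]
    rw [he]
    exact hneg s (lt_of_lt_of_le (by rw [hbdef]; linarith) hs.1) hs.2
  obtain ⟨u', v', huo', hvo', h0u', hbv', huv'⟩ :=
    generalized_tube_lemma isCompact_singleton isCompact_Icc hV hsubV
  obtain ⟨ε₂, hε₂, hball₂⟩ := Metric.isOpen_iff.mp huo' 0 (h0u' rfl)
  set εbar : ℝ := min ε₁ ε₂ / 2 with hεbardef
  have hεbarpos : 0 < εbar := by
    have := lt_min hε₁ hε₂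
    rw [hεbardef]; linarith [lt_min hε₁ hε₂]
  have hεmem : ∀ ε ∈ Icc (0:ℝ) εbar, ε ∈ u ∧ ε ∈ u' := by
    intro ε hε
    have h1 : |ε| < ε₁ := by
      rw [abs_of_nonneg hε.1]
      have := min_le_left ε₁ ε₂
      rw [hεbardef] at hε
      linarith [hε.2]
    have h2 : |ε| < ε₂ := by
      rw [abs_of_nonneg hε.1]
      have := min_le_right ε₁ ε₂
      rw [hεbardef] at hε
      linarith [hε.2]
    constructor
    · exact hball₁ (by rw [Metric.mem_ball, Real.dist_eq, sub_zero]; exact h1)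
    · exact hball₂ (by rw [Metric.mem_ball, Real.dist_eq, sub_zero]; exact h2)
  -- uniform positive lower bound on Icc 0 εbar × Icc 0 a
  have hcompP : IsCompact (Icc (0:ℝ) εbar ×ˢ Icc (0:ℝ) a) := isCompact_Icc.prod isCompact_Icc
  have hneP : (Icc (0:ℝ) εbar ×ˢ Icc (0:ℝ) a).Nonempty :=
    ⟨(0, 0), ⟨⟨le_rfl, hεbarpos.le⟩, ⟨le_rfl, ha0.le⟩⟩⟩
  obtain ⟨p₀, hp₀mem, hp₀min⟩ := hcompP.exists_isMinOn hneP hcont.continuousOn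
  set m : ℝ := h p₀.1 p₀.2 with hmdef
  have hm : 0 < m := huv ⟨(hεmem p₀.1 hp₀mem.1).1, hav hp₀mem.2⟩
  have hlower : ∀ ε ∈ Icc (0:ℝ) εbar, ∀ s, 0 ≤ s → s ≤ a → m ≤ h ε s := by
    intro ε hε s h1 h2
    exact hp₀min (⟨hε, ⟨h1, h2⟩⟩ : (ε, s) ∈ Icc (0:ℝ) εbar ×ˢ Icc (0:ℝ) a)
  -- uniform negative upper bound on Icc 0 εbar × Icc b 1
  have hcompN : IsCompact (Icc (0:ℝ) εbar ×ˢ Icc b 1) := isCompact_Icc.prod isCompact_Icc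
  have hneN : (Icc (0:ℝ) εbar ×ˢ Icc b 1).Nonempty :=
    ⟨(0, b), ⟨⟨le_rfl, hεbarpos.le⟩, ⟨le_rfl, hb1.le⟩⟩⟩
  obtain ⟨q₀, hq₀mem, hq₀max⟩ := hcompN.exists_isMaxOn hneN hcont.continuousOn
  set m' : ℝ := -(h q₀.1 q₀.2) with hm'def
  have hm' : 0 < m' := by
    have : h q₀.1 q₀.2 < 0 := huv' ⟨(hεmem q₀.1 hq₀mem.1).2, hbv' hq₀mem.2⟩
    rw [hm'def]; linarith
  have hupper : ∀ ε ∈ Icc (0:ℝ) εbar, ∀ s, b ≤ s → s ≤ 1 → h ε s ≤ -m' := by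
    intro ε hε s h1 h2
    have := hq₀max (⟨hε, ⟨h1, h2⟩⟩ : (ε, s) ∈ Icc (0:ℝ) εbar ×ˢ Icc b 1)
    rw [hm'def]; simpa using this
  refine ⟨εbar, hεbarpos, ?_⟩
  intro ε hε x hx hx0
  obtain ⟨C, hC⟩ := rhs_lipschitzOn (h ε) K (hLip ε)
  have hinv := invariant_Ioo (h ε) C hC x hx hx0
  have hev1 : ∀ᶠ t in atTop, a ≤ x t :=
    eventually_ge_barrier a ha0 (by linarith) (h ε) m hm
      (fun s h1 h2 => hlower ε hε s h1 h2) x hx hinv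
  -- transformation y = 1 - x for the upper bound
  set g' : ℝ → ℝ := fun s => -(h ε (1 - s)) with hg'def
  set y : ℝ → ℝ := fun t => 1 - x t with hydef
  have hy : ∀ t, HasDerivAt y (y t * (1 - y t) * g' (y t)) t := by
    intro t
    have h1 := (hx t).const_sub 1
    convert h1 using 1
    · rfl
    · rfl
    simp only [hydef, hg'def]
    ring_nf
  have hyinv : ∀ t, 0 ≤ t → y t ∈ Ioo (0:ℝ) 1 := by
    intro t ht
    have := hinv t ht
    exact ⟨by simp only [hydef]; linarith [this.2], by simp only [hydef]; linarith [this.1]⟩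
  have hg'low : ∀ s, 0 ≤ s → s ≤ 1 - b → m' ≤ g' s := by
    intro s h1 h2
    have h3 : b ≤ 1 - s := by linarith
    have h4 : 1 - s ≤ 1 := by linarith
    have := hupper ε hε (1 - s) h3 h4
    simp only [hg'def]; linarith
  have hev2 : ∀ᶠ t in atTop, 1 - b ≤ y t :=
    eventually_ge_barrier (1 - b) (by linarith) (by linarith) g' m' hm' hg'low y hy hyinv
  have hboundAbove : IsBoundedUnder (· ≤ ·) atTop x :=
    ⟨1, eventually_map.mpr (eventually_atTop.mpr ⟨0, fun t ht => (hinv t ht).2.le⟩)⟩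
  have hboundBelow : IsBoundedUnder (· ≥ ·) atTop x :=
    ⟨0, eventually_map.mpr (eventually_atTop.mpr ⟨0, fun t ht => (hinv t ht).1.le⟩)⟩
  constructor
  · exact le_liminf_of_le hboundAbove.isCoboundedUnder_ge hev1
  · refine limsup_le_of_le hboundBelow.isCoboundedUnder_le ?_
    exact hev2.mono fun t ht => by simp only [hydef] at ht; linarith
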